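/- The function f(x) = x·(ln x)²/(x−1)² is strictly decreasing on the interval (1, ∞). -/
import Mathlib

lemma aux_sinh_lt (t : ℝ) (ht : 0 < t) : Real.sinh t < t * Real.cosh t := by
  have h : StrictMonoOn (fun t : ℝ => t * Real.cosh t - Real.sinh t) (Set.Ici 0) := by
    apply strictMonoOn_of_deriv_pos (convex_Ici 0)
    · fun_prop
    · intro x hx
      rw [interior_Ici] at hx
      have hd : HasDerivAt (fun t : ℝ => t * Real.cosh t - Real.sinh t)
          (1 * Real.cosh x + x * Real.sinh x - Real.cosh x) x := by
        exact ((hasDerivAt_id x).mul (Real.hasDerivAt_cosh x)).sub (Real.hasDerivAt_sinh x)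
      rw [hd.deriv]
      have : 0 < x * Real.sinh x := mul_pos hx (Real.sinh_pos_iff.2 hx)
      linarith
  have := h (Set.self_mem_Ici) (Set.mem_Ici.2 ht.le) ht
  simpa using this

lemma aux_mono : StrictMonoOn (fun t : ℝ => Real.sinh t / t) (Set.Ioi 0) := by
  apply strictMonoOn_of_deriv_pos (convex_Ioi 0)
  · exact Real.continuous_sinh.continuousOn.div continuousOn_id (fun x hx => ne_of_gt hx)
  · intro x hx
    rw [interior_Ioi] at hx
    have hx0 : x ≠ 0 := ne_of_gt hx
    have hd : HasDerivAt (fun t : ℝ => Real.sinh t / t)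
        ((Real.cosh x * x - Real.sinh x * 1) / x ^ 2) x :=
      (Real.hasDerivAt_sinh x).div (hasDerivAt_id x) hx0
    rw [hd.deriv]
    have h1 : Real.sinh x < x * Real.cosh x := aux_sinh_lt x hx
    have h2 : (0:ℝ) < x ^ 2 := by positivity
    apply div_pos _ h2
    nlinarith

lemma aux_key (x : ℝ) (hx : 1 < x) :
    x * (Real.log x) ^ 2 / (x - 1) ^ 2
      = ((Real.log x / 2) / Real.sinh (Real.log x / 2)) ^ 2 := by
  set u := Real.log x / 2 with hu
  have hx0 : (0:ℝ) < x := lt_trans one_pos hx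
  have hlog : 0 < Real.log x := Real.log_pos hx
  have hu0 : 0 < u := by positivity
  have hE : Real.exp u * Real.exp u = x := by
    rw [← Real.exp_add]
    have : u + u = Real.log x := by rw [hu]; ring
    rw [this, Real.exp_log hx0]
  have hE1 : 1 < Real.exp u := by
    rw [← Real.exp_zero]
    exact Real.exp_lt_exp.2 hu0
  have hEpos : 0 < Real.exp u := Real.exp_pos u
  have hs : Real.sinh u = (Real.exp u - (Real.exp u)⁻¹) / 2 := by
    rw [Real.sinh_eq, Real.exp_neg]
  have hsne : Real.sinh u ≠ 0 := ne_of_gt (Real.sinh_pos_iff.2 hu0)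
  have hlx : Real.log x = 2 * u := by rw [hu]; ring
  have hxne : x - 1 ≠ 0 := by linarith
  have hEne : Real.exp u ≠ 0 := ne_of_gt hEpos
  have hsq : Real.sinh u ^ 2 = (x - 1) ^ 2 / (4 * x) := by
    have key : (Real.exp u - (Real.exp u)⁻¹) * Real.exp u = x - 1 := by
      rw [sub_mul, inv_mul_cancel₀ hEne, hE]
    rw [eq_div_iff (show (4:ℝ) * x ≠ 0 by positivity), hs]
    calc ((Real.exp u - (Real.exp u)⁻¹) / 2) ^ 2 * (4 * x)
        = ((Real.exp u - (Real.exp u)⁻¹) * Real.exp u) ^ 2 := by rw [← hE]; ring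
      _ = (x - 1) ^ 2 := by rw [key]
  rw [hlx, div_pow, hsq]
  rw [div_div_eq_mul_div, div_eq_div_iff (by positivity) (by positivity)]
  ring

theorem stmt_0 :
    StrictAntiOn (fun x : ℝ => x * (Real.log x) ^ 2 / (x - 1) ^ 2) (Set.Ioi 1) := by
  intro a ha b hb hab
  simp only [Set.mem_Ioi] at ha hb
  set s := Real.log a / 2 with hsdef
  set t := Real.log b / 2 with htdef
  have hs : 0 < s := by have := Real.log_pos ha; positivity
  have ht : 0 < t := by have := Real.log_pos hb; positivity
  have hst : s < t := by
    have := Real.log_lt_log (lt_trans one_pos ha) hab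
    rw [hsdef, htdef]; linarith
  have hkey := aux_mono (Set.mem_Ioi.2 hs) (Set.mem_Ioi.2 ht) hst
  simp only at hkey
  have hss : 0 < Real.sinh s := Real.sinh_pos_iff.2 hs
  have hts : 0 < Real.sinh t := Real.sinh_pos_iff.2 ht
  have h1 : t / Real.sinh t < s / Real.sinh s := by
    rw [div_lt_div_iff₀ hts hss]
    rw [div_lt_div_iff₀ hs ht] at hkey
    nlinarith
  have h2 : 0 < t / Real.sinh t := div_pos ht hts
  have hfb := aux_key b (hb)
  have hfa := aux_key a (ha)
  simp only
  rw [hfb, hfa, ← htdef, ← hsdef]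
  exact pow_lt_pow_left₀ h1 h2.le (by norm_num)
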